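/- Let T_fin(A) be the set of finite injective tuples of atoms (lists of pairwise distinct elements of A, including the empty tuple ε), with finitary permutations acting componentwise. Then: (i) for any fixed atom a there is a surjection f : T_fin(A) → T_fin(A) ∖ {ε} supported by {a} (sending ε to the one-element tuple (a) and every other tuple to itself); (ii) there is an equivariant (empty-supported) surjection g : T_fin(A) ∖ {ε} → T_fin(A) (deleting the first entry of a tuple, and sending one-element tuples to ε); (iii) nevertheless, there is no finitely supported injection from T_fin(A) into T_fin(A) ∖ {ε}; in particular there is no finitely supported bijection between T_fin(A) and T_fin(A) ∖ {ε}. -/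

import Mathlib

open Pointwise

/-- The group of finitary permutations of the set `A` of atoms: bijections of `A`
whose set of non-fixed points is finite. -/
def FinPerm (A : Type*) : Subgroup (Equiv.Perm A) where
  carrier := {π : Equiv.Perm A | {a : A | π a ≠ a}.Finite}
  one_mem' := by simp
  mul_mem' := by
    intro π σ hπ hσ
    refine Set.Finite.subset (Set.Finite.union hπ hσ) ?_
    intro a ha
    simp only [Set.mem_setOf_eq, Set.mem_union] at *
    by_contra h
    push_neg at h
    obtain ⟨h1, h2⟩ := h
    exact ha (by rw [Equiv.Perm.mul_apply, h2, h1])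
  inv_mem' := by
    intro π hπ
    refine Set.Finite.subset hπ ?_
    intro a ha
    simp only [Set.mem_setOf_eq] at *
    intro h
    exact ha (π.injective (by rw [show π (π⁻¹ a) = a from π.apply_symm_apply a, h]))

/-- An element `x` is finitely supported if some finite set of atoms supports it. -/
def FinSupp (A : Type*) {X : Type*} [SMul (FinPerm A) X] (x : X) : Prop :=
  ∃ S : Finset A, MulAction.Supports (FinPerm A) (S : Set A) x

/-- The least support of an element: the intersection of all finite sets of atoms
supporting it. -/
def supp (A : Type*) {X : Type*} [SMul (FinPerm A) X] (x : X) : Set A :=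
  ⋂₀ {S : Set A | S.Finite ∧ MulAction.Supports (FinPerm A) S x}

/-- A set `S` of atoms supports a function `f` if `f (π • x) = π • f x` for every
finitary permutation `π` fixing `S` pointwise. -/
def SuppFun (A : Type*) {X Y : Type*} [SMul (FinPerm A) X] [SMul (FinPerm A) Y]
    (S : Set A) (f : X → Y) : Prop :=
  ∀ π : FinPerm A, (∀ a ∈ S, π • a = a) → ∀ x, f (π • x) = π • f x

/-- A set `S` of atoms supports a function `f` between the subsets `X` and `Y` if, for
every finitary permutation `π` fixing `S` pointwise and every `x ∈ X`, we have
`π • x ∈ X`, `π • f x ∈ Y` and `f (π • x) = π • f x`. -/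
def SuppFunOn (A : Type*) {U V : Type*} [SMul (FinPerm A) U] [SMul (FinPerm A) V]
    (S : Set A) (X : Set U) (Y : Set V) (f : U → V) : Prop :=
  ∀ π : FinPerm A, (∀ a ∈ S, π • a = a) →
    ∀ x ∈ X, π • x ∈ X ∧ π • f x ∈ Y ∧ f (π • x) = π • f x

/-- `℘_fs(X)`: the finitely supported subsets of the set `X`. -/
def Pfs (A : Type*) {U : Type*} [SMul (FinPerm A) U] (X : Set U) : Set (Set U) :=
  {Z : Set U | Z ⊆ X ∧ FinSupp A Z}


/-- Finite injective tuples of atoms: lists of pairwise distinct elements of `A`. -/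
def TFin (A : Type*) : Type _ := {l : List A // l.Nodup}

instance TFin.instSMul (A : Type*) : SMul (FinPerm A) (TFin A) :=
  ⟨fun π t => ⟨t.1.map (fun a => π • a), t.2.map (MulAction.injective π)⟩⟩

instance TFin.instMulAction (A : Type*) : MulAction (FinPerm A) (TFin A) where
  one_smul t := Subtype.ext (by
    show t.1.map (fun a => (1 : FinPerm A) • a) = t.1
    simp)
  mul_smul π σ t := Subtype.ext (by
    show t.1.map (fun a => (π * σ) • a) = (t.1.map (fun a => σ • a)).map (fun a => π • a)
    simp [List.map_map, mul_smul, Function.comp])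


noncomputable def swapFP {A : Type*} (b c : A) : FinPerm A := by
  classical
  exact ⟨Equiv.swap b c, by
    refine Set.Finite.subset (((Set.finite_singleton c).insert b)) ?_
    intro x hx
    simp only [Set.mem_setOf_eq] at hx
    by_contra h
    simp only [Set.mem_insert_iff, Set.mem_singleton_iff, not_or] at h
    exact hx (Equiv.swap_apply_of_ne_of_ne h.1 h.2)⟩

lemma tfin_smul_def' {A : Type*} (π : FinPerm A) (t : TFin A) :
    (π • t).1 = t.1.map (fun a => π • a) := rfl

lemma mem_of_suppFun' {A : Type*} [Infinite A] (S : Finset A) (f : TFin A → TFin A)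
    (hf : SuppFun A (S : Set A) f) (t : TFin A) :
    ∀ b ∈ (f t).1, b ∈ S ∨ b ∈ t.1 := by
  classical
  intro b hb
  by_contra h
  push_neg at h
  obtain ⟨hbS, hbt⟩ := h
  obtain ⟨c, hc⟩ := Infinite.exists_notMem_finset (S ∪ t.1.toFinset ∪ (f t).1.toFinset)
  simp only [Finset.mem_union, List.mem_toFinset, not_or] at hc
  obtain ⟨⟨hcS, hct⟩, hcf⟩ := hc
  set π : FinPerm A := swapFP b c with hπ
  have hswap : ∀ x : A, π • x = Equiv.swap b c x := fun x => rfl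
  have hfix : ∀ x ∈ (S : Set A), π • x = x := by
    intro x hx
    rw [hswap]
    exact Equiv.swap_apply_of_ne_of_ne (fun h => hbS (h ▸ hx)) (fun h => hcS (h ▸ hx))
  have ht : π • t = t := by
    apply Subtype.ext
    rw [tfin_smul_def']
    refine (List.map_congr_left ?_).trans (List.map_id _)
    intro x hx
    rw [hswap]
    exact Equiv.swap_apply_of_ne_of_ne (fun h => hbt (h ▸ hx)) (fun h => hct (h ▸ hx))
  have heq := hf π hfix t
  rw [ht] at heq
  have hmem : π • b ∈ (f t).1.map (fun a => π • a) := List.mem_map_of_mem hb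
  rw [← tfin_smul_def', ← heq] at hmem
  rw [hswap, Equiv.swap_apply_left] at hmem
  exact hcf hmem

lemma finite_tfin_subset' {A : Type*} (S : Finset A) :
    {t : TFin A | ∀ b ∈ t.1, b ∈ S}.Finite := by
  classical
  have h1 : {l : List {x // x ∈ S} | l.length ≤ S.card}.Finite := List.finite_length_le _ _
  have h2 := h1.image (fun l => l.map Subtype.val)
  apply Set.Finite.of_finite_image (f := Subtype.val) ?_ Subtype.val_injective.injOn
  apply Set.Finite.subset h2
  rintro l ⟨t, ht, rfl⟩
  refine ⟨t.1.pmap (fun a h => (⟨a, h⟩ : {x // x ∈ S})) ht, ?_, ?_⟩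
  · simp only [Set.mem_setOf_eq, List.length_pmap]
    rw [← List.toFinset_card_of_nodup t.2]
    apply Finset.card_le_card
    intro b hb
    rw [List.mem_toFinset] at hb
    exact ht b hb
  · simp [List.map_pmap]

/-- with `T_fin(A)` the invariant set of finite injective tuples of atoms
(with the componentwise action) and `ε` the empty tuple:
(i) for any atom `a` there is a surjection from `T_fin(A)` onto `T_fin(A) ∖ {ε}`
    supported by `{a}`;
(ii) there is an equivariant (empty-supported) surjection from `T_fin(A) ∖ {ε}` onto
     `T_fin(A)`;
(iii) nevertheless there is no finitely supported injection from `T_fin(A)` into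
      `T_fin(A) ∖ {ε}`; in particular there is no finitely supported bijection between
      `T_fin(A)` and `T_fin(A) ∖ {ε}`. -/
theorem tfin_surjections_but_no_finSupp_injection {A : Type*} [Infinite A] :
    (∀ a : A, ∃ f : TFin A → TFin A,
      (∀ t, (f t).1 ≠ []) ∧
      (∀ y : TFin A, y.1 ≠ [] → ∃ t, f t = y) ∧
      SuppFun A ({a} : Set A) f) ∧
    (∃ g : TFin A → TFin A,
      (∀ y : TFin A, ∃ t : TFin A, t.1 ≠ [] ∧ g t = y) ∧
      SuppFun A (∅ : Set A) g) ∧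
    (¬ ∃ (f : TFin A → TFin A) (S : Finset A),
      Function.Injective f ∧ (∀ t, (f t).1 ≠ []) ∧ SuppFun A (S : Set A) f) ∧
    (¬ ∃ (h : TFin A → TFin A) (S : Finset A),
      Function.Injective h ∧ (∀ t, (h t).1 ≠ []) ∧
      (∀ y : TFin A, y.1 ≠ [] → ∃ t, h t = y) ∧ SuppFun A (S : Set A) h) := by
  classical
  have noInj : ¬ ∃ (f : TFin A → TFin A) (S : Finset A),
      Function.Injective f ∧ (∀ t, (f t).1 ≠ []) ∧ SuppFun A (S : Set A) f := by
    rintro ⟨f, S, hinj, hne, hsupp⟩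
    set ε : TFin A := ⟨[], List.nodup_nil⟩ with hε
    set D : Set (TFin A) := {t : TFin A | ∀ b ∈ t.1, b ∈ S} with hDdef
    have hD : D.Finite := finite_tfin_subset' S
    have hεD : ε ∈ D := by intro b hb; simp [hε] at hb
    have himg : f '' D ⊆ D \ {ε} := by
      rintro _ ⟨t, ht, rfl⟩
      refine ⟨?_, ?_⟩
      · intro b hb
        rcases mem_of_suppFun' S f hsupp t b hb with h | h
        · exact h
        · exact ht b h
      · intro h
        exact hne t (congrArg Subtype.val h)
    have h1 : D.ncard ≤ (D \ {ε}).ncard := by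
      rw [← Set.ncard_image_of_injective D hinj]
      exact Set.ncard_le_ncard himg hD.diff
    have h2 : (D \ {ε}).ncard < D.ncard := Set.ncard_diff_singleton_lt_of_mem hεD hD
    omega
  refine ⟨?_, ?_, noInj, ?_⟩
  · intro a
    refine ⟨fun t => if t.1 = [] then ⟨[a], List.nodup_singleton a⟩ else t, ?_, ?_, ?_⟩
    · intro t
      dsimp only
      by_cases hh : t.1 = []
      · simp [hh]
      · simp [hh]
    · intro y hy
      exact ⟨y, by simp [hy]⟩
    · intro π hπ t
      have ha : π • a = a := hπ a rfl
      by_cases h : t.1 = []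
      · have h2 : (π • t).1 = [] := by rw [tfin_smul_def', h]; rfl
        simp only [h, h2, if_pos]
        apply Subtype.ext
        rw [tfin_smul_def']
        simp [ha]
      · have h2 : (π • t).1 ≠ [] := by
          rw [tfin_smul_def']
          simpa using h
        simp only [h, h2, ↓reduceIte]
  · refine ⟨fun t => ⟨t.1.tail, t.2.tail⟩, ?_, ?_⟩
    · intro y
      obtain ⟨c, hc⟩ := Infinite.exists_notMem_finset y.1.toFinset
      rw [List.mem_toFinset] at hc
      exact ⟨⟨c :: y.1, List.nodup_cons.mpr ⟨hc, y.2⟩⟩, by simp, rfl⟩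
    · intro π _ t
      apply Subtype.ext
      show ((π • t).1).tail = (t.1.tail).map (fun a => π • a)
      rw [tfin_smul_def']
      exact List.map_tail.symm
  · rintro ⟨h, S, hinj, hne, _, hsupp⟩
    exact noInj ⟨h, S, hinj, hne, hsupp⟩
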